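/- Let ζ : ℝ → ℝ be nonnegative, even, integrable with ∫_ℝ ζ = 1, let ε > 0, k > 0, V₀ ∈ ℝ, α ∈ {1,−1}, and set R(x;ε) = ε⁻¹ζ(x/ε) and β = ∫_ℝ R(y;ε) cos(2ky) dy. Assume β ≠ 0, set A = −V₀/(αβ), assume B ≥ max{−A, 0}, and set ω = (V₀+k²)/2 + αB − V₀/(2β). Then ψ(x,t) = (√B cos(kx) + i√(B+A) sin(kx)) e^{−iωt} satisfies, for all (x,t) ∈ ℝ², the nonlocal Gross–Pitaevskii equation i∂_tψ = −(1/2)∂²_xψ + αψ(x,t)·∫_ℝ R(x−y;ε)|ψ(y,t)|² dy + V₀ sin²(kx) ψ. -/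

import Mathlib

open MeasureTheory

/-- the explicit traveling-wave family
`ψ(x,t) = (√B cos(kx) + i√(B+A) sin(kx)) e^{−iωt}`, with `A = −V₀/(αβ)` and
`ω = (V₀+k²)/2 + αB − V₀/(2β)`, solves the nonlocal Gross–Pitaevskii equation
`i∂_tψ = −(1/2)∂²_xψ + αψ·(R(·;ε)∗|ψ|²) + V₀ sin²(kx)ψ` with kernel
`R(x;ε) = ε⁻¹ζ(x/ε)`. -/
theorem traveling_wave_solves_nonlocal_GP
    (ζ : ℝ → ℝ) (hζ0 : ∀ x, 0 ≤ ζ x) (hζeven : ∀ x, ζ (-x) = ζ x)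
    (hζint : Integrable ζ) (hζ1 : (∫ x : ℝ, ζ x) = 1)
    (ε k V₀ α : ℝ) (hε : 0 < ε) (hk : 0 < k) (hα : α = 1 ∨ α = -1)
    (β : ℝ) (hβ : β = ∫ y : ℝ, ε⁻¹ * ζ (y / ε) * Real.cos (2 * k * y)) (hβ0 : β ≠ 0)
    (A : ℝ) (hA : A = -V₀ / (α * β))
    (B : ℝ) (hB : B ≥ max (-A) 0)
    (ω : ℝ) (hω : ω = (V₀ + k ^ 2) / 2 + α * B - V₀ / (2 * β))
    (ψ : ℝ → ℝ → ℂ)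
    (hψ : ∀ x t : ℝ, ψ x t =
      ((↑(Real.sqrt B * Real.cos (k * x)) : ℂ)
        + Complex.I * (↑(Real.sqrt (B + A) * Real.sin (k * x)) : ℂ))
      * Complex.exp (-Complex.I * (ω : ℂ) * (t : ℂ))) :
    ∀ x t : ℝ,
      Complex.I * deriv (fun s => ψ x s) t =
        -(1 / 2 : ℂ) * deriv (deriv (fun y => ψ y t)) x
        + (α : ℂ) * ψ x t * (↑(∫ y : ℝ, ε⁻¹ * ζ ((x - y) / ε) * ‖ψ y t‖ ^ 2) : ℂ)
        + (↑(V₀ * Real.sin (k * x) ^ 2) : ℂ) * ψ x t := by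
  intro x t
  have hB0 : (0:ℝ) ≤ B := le_trans (le_max_right _ _) hB
  have hBA : (0:ℝ) ≤ B + A := by
    have := le_trans (le_max_left (-A) 0) hB; linarith
  have hα0 : α ≠ 0 := by rcases hα with h | h <;> rw [h] <;> norm_num
  have hα2 : α * α = 1 := by rcases hα with h | h <;> rw [h] <;> norm_num
  set c := Real.sqrt B with hc
  set d := Real.sqrt (B + A) with hd
  have hc2 : c ^ 2 = B := Real.sq_sqrt hB0
  have hd2 : d ^ 2 = B + A := Real.sq_sqrt hBA
  set g : ℝ → ℝ := fun z => ε⁻¹ * ζ (z / ε) with hg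
  -- kernel facts
  have hgint : Integrable g := (hζint.comp_div hε.ne').const_mul _
  have hgtot : (∫ z : ℝ, g z) = 1 := by
    simp only [hg]
    rw [integral_const_mul, MeasureTheory.Measure.integral_comp_div ζ ε, hζ1,
      abs_of_pos hε]
    simp [inv_mul_cancel₀ hε.ne']
  have hcosm : Integrable (fun z : ℝ => g z * Real.cos (2 * k * z)) := by
    have : Integrable (fun z : ℝ => Real.cos (2 * k * z) * g z) :=
      hgint.bdd_mul ((Real.continuous_cos.comp (continuous_const.mul continuous_id)).aestronglyMeasurable)
        (c := 1) (Filter.Eventually.of_forall fun z => by simpa using Real.abs_cos_le_one (2 * k * z))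
    simpa [mul_comm] using this
  have hsinm : Integrable (fun z : ℝ => g z * Real.sin (2 * k * z)) := by
    have : Integrable (fun z : ℝ => Real.sin (2 * k * z) * g z) :=
      hgint.bdd_mul ((Real.continuous_sin.comp (continuous_const.mul continuous_id)).aestronglyMeasurable)
        (c := 1) (Filter.Eventually.of_forall fun z => by simpa using Real.abs_sin_le_one (2 * k * z))
    simpa [mul_comm] using this
  have hsin0 : (∫ z : ℝ, g z * Real.sin (2 * k * z)) = 0 := by
    have h1 := integral_neg_eq_self (fun z : ℝ => g z * Real.sin (2 * k * z)) volume
    have h2 : (fun z : ℝ => g (-z) * Real.sin (2 * k * -z))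
        = fun z : ℝ => -(g z * Real.sin (2 * k * z)) := by
      funext z
      have : g (-z) = g z := by simp only [hg, neg_div]; rw [hζeven]
      rw [this]; rw [show 2 * k * -z = -(2 * k * z) by ring, Real.sin_neg]; ring
    rw [h2, integral_neg] at h1
    linarith
  -- norm of the wave
  have hnorm : ∀ y : ℝ, ‖ψ y t‖ ^ 2 = B + A * Real.sin (k * y) ^ 2 := by
    intro y
    rw [hψ, norm_mul]
    have h1 : ‖Complex.exp (-Complex.I * (ω : ℂ) * (t : ℂ))‖ = 1 := by
      rw [Complex.norm_exp]
      simp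
    rw [h1, mul_one]
    have h2 : ‖((c * Real.cos (k * y) : ℝ) : ℂ)
        + Complex.I * ((d * Real.sin (k * y) : ℝ) : ℂ)‖ ^ 2
        = (c * Real.cos (k * y)) ^ 2 + (d * Real.sin (k * y)) ^ 2 := by
      rw [Complex.sq_norm, mul_comm Complex.I,
        Complex.normSq_add_mul_I]
    rw [h2]
    have h3 := Real.sin_sq_add_cos_sq (k * y)
    nlinarith [hc2, hd2]
  -- the convolution integral
  have hI : (∫ y : ℝ, ε⁻¹ * ζ ((x - y) / ε) * ‖ψ y t‖ ^ 2)
      = B + A / 2 - A / 2 * β * Real.cos (2 * k * x) := by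
    have e1 : (fun y : ℝ => ε⁻¹ * ζ ((x - y) / ε) * ‖ψ y t‖ ^ 2)
        = fun y : ℝ => g (x - y) * (B + A * Real.sin (k * y) ^ 2) := by
      funext y; rw [hnorm y]
    rw [e1]
    set G : ℝ → ℝ := fun z => g z * (B + A * Real.sin (k * (x - z)) ^ 2) with hG
    have e2 : (∫ y : ℝ, g (x - y) * (B + A * Real.sin (k * y) ^ 2)) = ∫ z : ℝ, G z := by
      rw [← integral_sub_left_eq_self G volume x]
      congr 1
      funext y
      simp only [hG]
      rw [show x - (x - y) = y by ring]
    rw [e2]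
    have hGexp : G = fun z : ℝ => (B + A / 2) * g z
        + (-(A / 2) * Real.cos (2 * k * x)) * (g z * Real.cos (2 * k * z))
        + (-(A / 2) * Real.sin (2 * k * x)) * (g z * Real.sin (2 * k * z)) := by
      funext z
      simp only [hG]
      have h1 : Real.sin (k * (x - z)) ^ 2
          = 1 / 2 - Real.cos (2 * (k * (x - z))) / 2 := Real.sin_sq_eq_half_sub _
      have h2 : Real.cos (2 * (k * (x - z)))
          = Real.cos (2 * k * x) * Real.cos (2 * k * z)
            + Real.sin (2 * k * x) * Real.sin (2 * k * z) := by
        rw [show 2 * (k * (x - z)) = 2 * k * x - 2 * k * z by ring, Real.cos_sub]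
      rw [h1, h2]; ring
    rw [hGexp]
    have i1 : Integrable (fun z : ℝ => (B + A / 2) * g z) := hgint.const_mul _
    have i2 : Integrable (fun z : ℝ =>
        (-(A / 2) * Real.cos (2 * k * x)) * (g z * Real.cos (2 * k * z))) :=
      hcosm.const_mul _
    have i3 : Integrable (fun z : ℝ =>
        (-(A / 2) * Real.sin (2 * k * x)) * (g z * Real.sin (2 * k * z))) :=
      hsinm.const_mul _
    have i12 : Integrable (fun z : ℝ => (B + A / 2) * g z
        + (-(A / 2) * Real.cos (2 * k * x)) * (g z * Real.cos (2 * k * z))) := i1.add i2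
    rw [integral_add i12 i3, integral_add i1 i2,
      integral_const_mul (B + A / 2) g,
      integral_const_mul (-(A / 2) * Real.cos (2 * k * x))
        (fun z => g z * Real.cos (2 * k * z)),
      integral_const_mul (-(A / 2) * Real.sin (2 * k * x))
        (fun z => g z * Real.sin (2 * k * z)),
      hgtot, hsin0]
    have : (∫ z : ℝ, g z * Real.cos (2 * k * z)) = β := by
      rw [hβ]
    rw [this]; ring
  -- derivatives
  set u : ℝ → ℂ := fun y => ((c * Real.cos (k * y) : ℝ) : ℂ)
    + Complex.I * ((d * Real.sin (k * y) : ℝ) : ℂ) with hu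
  set E : ℝ → ℂ := fun s => Complex.exp (-Complex.I * (ω : ℂ) * (s : ℂ)) with hE
  have hψeq : ∀ y s : ℝ, ψ y s = u y * E s := fun y s => hψ y s
  -- time derivative
  have hEt : ∀ s : ℝ, HasDerivAt E (-Complex.I * (ω : ℂ) * E s) s := by
    intro s
    have h1 : HasDerivAt (fun s : ℝ => -Complex.I * (ω : ℂ) * (s : ℂ))
        (-Complex.I * (ω : ℂ)) s := by
      simpa using (Complex.ofRealCLM.hasDerivAt (x := s)).const_mul (-Complex.I * (ω : ℂ))
    have := h1.cexp
    simpa [hE, mul_comm] using this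
  have hdt : deriv (fun s => ψ x s) t = u x * (-Complex.I * (ω : ℂ) * E t) := by
    have h1 : (fun s => ψ x s) = fun s => u x * E s := funext fun s => hψeq x s
    rw [h1]
    exact (((hEt t).const_mul (u x)).deriv)
  -- space derivatives
  have hcosd : ∀ y : ℝ, HasDerivAt (fun y : ℝ => c * Real.cos (k * y))
      (-(c * k) * Real.sin (k * y)) y := by
    intro y
    have h := ((Real.hasDerivAt_cos (k * y)).comp y ((hasDerivAt_id y).const_mul k))
    have := h.const_mul c
    exact this.congr_deriv (by ring)
  have hsind : ∀ y : ℝ, HasDerivAt (fun y : ℝ => d * Real.sin (k * y))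
      ((d * k) * Real.cos (k * y)) y := by
    intro y
    have h := ((Real.hasDerivAt_sin (k * y)).comp y ((hasDerivAt_id y).const_mul k))
    have := h.const_mul d
    exact this.congr_deriv (by ring)
  have hx1 : ∀ y : ℝ, HasDerivAt (fun y => ψ y t)
      ((((-(c * k) * Real.sin (k * y) : ℝ) : ℂ)
        + Complex.I * (((d * k) * Real.cos (k * y) : ℝ) : ℂ)) * E t) y := by
    intro y
    have h1 := (hcosd y).ofReal_comp
    have h2 := ((hsind y).ofReal_comp).const_mul Complex.I
    have h3 := (h1.add h2).mul_const (E t)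
    have h4 : (fun y => ψ y t) = fun y => u y * E t := funext fun y => hψeq y t
    rw [h4]
    exact h3
  have hx2 : deriv (deriv (fun y => ψ y t)) x
      = (((-(c * k ^ 2) * Real.cos (k * x) : ℝ) : ℂ)
        + Complex.I * ((-(d * k ^ 2) * Real.sin (k * x) : ℝ) : ℂ)) * E t := by
    have h1 : deriv (fun y => ψ y t)
        = fun y => ((((-(c * k) * Real.sin (k * y) : ℝ) : ℂ)
          + Complex.I * (((d * k) * Real.cos (k * y) : ℝ) : ℂ)) * E t) :=
      funext fun y => (hx1 y).deriv
    rw [h1]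
    have h2 : ∀ y : ℝ, HasDerivAt (fun y : ℝ => -(c * k) * Real.sin (k * y))
        (-(c * k ^ 2) * Real.cos (k * x)) x → True := fun _ _ => trivial
    have hcosd2 : HasDerivAt (fun y : ℝ => -(c * k) * Real.sin (k * y))
        (-(c * k ^ 2) * Real.cos (k * x)) x := by
      have h := ((Real.hasDerivAt_sin (k * x)).comp x ((hasDerivAt_id x).const_mul k))
      have := h.const_mul (-(c * k))
      exact this.congr_deriv (by ring)
    have hsind2 : HasDerivAt (fun y : ℝ => (d * k) * Real.cos (k * y))
        (-(d * k ^ 2) * Real.sin (k * x)) x := by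
      have h := ((Real.hasDerivAt_cos (k * x)).comp x ((hasDerivAt_id x).const_mul k))
      have := h.const_mul (d * k)
      exact this.congr_deriv (by ring)
    exact (((hcosd2.ofReal_comp).add ((hsind2.ofReal_comp).const_mul Complex.I)).mul_const
      (E t)).deriv
  -- the key real identity
  have hαA : α * A = -V₀ / β := by
    rw [hA]; field_simp
  have hαAβ : α * A * β = -V₀ := by
    rw [hαA]; field_simp
  have hreal : ω = k ^ 2 / 2
      + α * (B + A / 2 - A / 2 * β * Real.cos (2 * k * x))
      + V₀ * Real.sin (k * x) ^ 2 := by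
    have hs : Real.sin (k * x) ^ 2 = 1 / 2 - Real.cos (2 * k * x) / 2 := by
      rw [Real.sin_sq_eq_half_sub, show 2 * (k * x) = 2 * k * x by ring]
    rw [hω, hs]
    have hb : V₀ / (2 * β) = -(α * A) / 2 := by
      rw [hαA]; field_simp
    rw [hb]
    linear_combination (Real.cos (2 * k * x) / 2) * hαAβ
  -- assemble
  rw [hdt, hx2, hI, hψeq x t]
  have hrealC : (ω : ℂ) = ((k ^ 2 / 2 : ℝ) : ℂ)
      + ((α : ℝ) : ℂ) * (((B + A / 2 - A / 2 * β * Real.cos (2 * k * x) : ℝ)) : ℂ)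
      + (((V₀ * Real.sin (k * x) ^ 2 : ℝ)) : ℂ) :=
    mod_cast congrArg (fun r : ℝ => (r : ℂ)) hreal
  rw [hu, hE]
  beta_reduce
  push_cast at hrealC ⊢
  linear_combination (((c : ℂ) * Complex.cos ((k : ℂ) * (x : ℂ))
      + Complex.I * ((d : ℂ) * Complex.sin ((k : ℂ) * (x : ℂ))))
      * Complex.exp (-Complex.I * (ω : ℂ) * (t : ℂ))) * hrealC
    - ((ω : ℂ) * (((c : ℂ) * Complex.cos ((k : ℂ) * (x : ℂ))
      + Complex.I * ((d : ℂ) * Complex.sin ((k : ℂ) * (x : ℂ))))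
      * Complex.exp (-Complex.I * (ω : ℂ) * (t : ℂ)))) * Complex.I_mul_I
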